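/- Let G be a finite graph and let v be a vertex of degree at most 1 in G. If the graph G − v obtained by deleting v has a 3-segment representation, then G has a 3-segment representation. -/

import Mathlib

/-- The relative interior of the axis-parallel segment `Set.Icc a b` in `ℝ³`. -/
def segRelInt (a b : Fin 3 → ℝ) : Set (Fin 3 → ℝ) :=
  Set.Icc a b ∩ {x | ∀ i, a i < b i → a i < x i ∧ x i < b i}

/-- `lo, hi : V → Fin 3 → ℝ` give a `3`-segment representation of `G`. -/
def IsSegRep {V : Type*} (G : SimpleGraph V) (lo hi : V → Fin 3 → ℝ) : Prop :=
  (∀ v, ∃ i, lo v i < hi v i ∧ ∀ j, j ≠ i → lo v j = hi v j) ∧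
  (∀ u v : V, u ≠ v →
    (G.Adj u v ↔ (Set.Icc (lo u) (hi u) ∩ Set.Icc (lo v) (hi v)).Nonempty)) ∧
  (∀ u v : V, u ≠ v → Disjoint (segRelInt (lo u) (hi u)) (segRelInt (lo v) (hi v))) ∧
  (∀ u v : V, u ≠ v → ¬ Collinear ℝ (Set.Icc (lo u) (hi u) ∪ Set.Icc (lo v) (hi v)))


lemma collinear_pi_line (i : Fin 3) (c : Fin 3 → ℝ) :
    Collinear ℝ {q : Fin 3 → ℝ | ∀ k, k ≠ i → q k = c k} := by
  rw [collinear_iff_exists_forall_eq_smul_vadd]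
  refine ⟨fun k => if k = i then 0 else c k, fun k => if k = i then 1 else 0,
    fun q hq => ⟨q i, funext fun k => ?_⟩⟩
  by_cases hk : k = i
  · subst hk; simp
  · simp [hk, hq k hk]

lemma coord_eq_of_collinear {s : Set (Fin 3 → ℝ)} (hs : Collinear ℝ s)
    {p q x : Fin 3 → ℝ} (hp : p ∈ s) (hq : q ∈ s) (hx : x ∈ s) {j : Fin 3}
    (hpq : ∀ k, k ≠ j → p k = q k) (hj : p j ≠ q j) :
    ∀ k, k ≠ j → x k = p k := by
  rw [collinear_iff_of_mem hp] at hs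
  obtain ⟨d, hd⟩ := hs
  obtain ⟨cq, hcq⟩ := hd q hq
  obtain ⟨cx, hcx⟩ := hd x hx
  have hcq0 : cq ≠ 0 := by
    rintro rfl; apply hj; rw [hcq]; simp
  have hdk : ∀ k, k ≠ j → d k = 0 := by
    intro k hk
    have h1 : q k = cq * d k + p k := by rw [hcq]; simp
    have h2 := hpq k hk
    have : cq * d k = 0 := by linarith
    exact (mul_eq_zero.mp this).resolve_left hcq0
  intro k hk
  have h1 : x k = cx * d k + p k := by rw [hcx]; simp
  rw [hdk k hk] at h1
  simpa using h1

lemma IsSegRep.extend {V : Type*} (G : SimpleGraph V) (v : V)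
    (lo hi : ({v}ᶜ : Set V) → Fin 3 → ℝ)
    (h : IsSegRep (G.induce ({v}ᶜ : Set V)) lo hi)
    (a b : Fin 3 → ℝ)
    (h1 : ∃ i, a i < b i ∧ ∀ j, j ≠ i → a j = b j)
    (h2 : ∀ w : ({v}ᶜ : Set V), G.Adj v ↑w ↔
      (Set.Icc a b ∩ Set.Icc (lo w) (hi w)).Nonempty)
    (h3 : ∀ w : ({v}ᶜ : Set V), Disjoint (segRelInt a b) (segRelInt (lo w) (hi w)))
    (h4 : ∀ w : ({v}ᶜ : Set V), ¬ Collinear ℝ (Set.Icc a b ∪ Set.Icc (lo w) (hi w))) :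
    ∃ LO HI : V → Fin 3 → ℝ, IsSegRep G LO HI := by
  classical
  refine ⟨fun w => if h : w = v then a else lo ⟨w, h⟩,
          fun w => if h : w = v then b else hi ⟨w, h⟩, ?_, ?_, ?_, ?_⟩
  · intro w
    by_cases hw : w = v
    · subst hw; simpa using h1
    · simpa [hw] using h.1 ⟨w, hw⟩
  · intro x y hxy
    by_cases hx : x = v
    · have hy : ¬ y = v := fun hh => hxy (hx.trans hh.symm)
      rw [hx]
      simp only [dif_pos, dif_neg hy]
      exact h2 ⟨y, hy⟩
    · by_cases hy : y = v
      · rw [hy]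
        simp only [dif_neg hx, dif_pos]
        rw [G.adj_comm, Set.inter_comm]
        exact h2 ⟨x, hx⟩
      · simp only [dif_neg hx, dif_neg hy]
        have hne : (⟨x, hx⟩ : ({v}ᶜ : Set V)) ≠ ⟨y, hy⟩ := by
          simp [Subtype.ext_iff, hxy]
        exact h.2.1 ⟨x, hx⟩ ⟨y, hy⟩ hne
  · intro x y hxy
    by_cases hx : x = v
    · have hy : ¬ y = v := fun hh => hxy (hx.trans hh.symm)
      rw [hx]
      simp only [dif_pos, dif_neg hy]
      exact h3 ⟨y, hy⟩
    · by_cases hy : y = v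
      · rw [hy]
        simp only [dif_neg hx, dif_pos]
        exact (h3 ⟨x, hx⟩).symm
      · simp only [dif_neg hx, dif_neg hy]
        have hne : (⟨x, hx⟩ : ({v}ᶜ : Set V)) ≠ ⟨y, hy⟩ := by
          simp [Subtype.ext_iff, hxy]
        exact h.2.2.1 ⟨x, hx⟩ ⟨y, hy⟩ hne
  · intro x y hxy
    by_cases hx : x = v
    · have hy : ¬ y = v := fun hh => hxy (hx.trans hh.symm)
      rw [hx]
      simp only [dif_pos, dif_neg hy]
      exact h4 ⟨y, hy⟩
    · by_cases hy : y = v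
      · rw [hy]
        simp only [dif_neg hx, dif_pos]
        rw [Set.union_comm]
        exact h4 ⟨x, hx⟩
      · simp only [dif_neg hx, dif_neg hy]
        have hne : (⟨x, hx⟩ : ({v}ᶜ : Set V)) ≠ ⟨y, hy⟩ := by
          simp [Subtype.ext_iff, hxy]
        exact h.2.2.2 ⟨x, hx⟩ ⟨y, hy⟩ hne

/-- If `v` has degree at most `1` in the finite graph `G` and `G - v` has a `3`-segment
representation, then so does `G`. -/
theorem segRep_of_deleteLowDegreeVertex {V : Type*} [Fintype V] (G : SimpleGraph V)
    (v : V) (hdeg : (G.neighborSet v).ncard ≤ 1)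
    (h : ∃ lo hi : ({v}ᶜ : Set V) → Fin 3 → ℝ,
      IsSegRep (G.induce ({v}ᶜ : Set V)) lo hi) :
    ∃ lo hi : V → Fin 3 → ℝ, IsSegRep G lo hi := by
  rcases Nat.le_one_iff_eq_zero_or_eq_one.mp hdeg with hd0 | hd1
  ·
    classical
    obtain ⟨lo, hi, hrep⟩ := h
    have hle : ∀ (w : ({v}ᶜ : Set V)) (k : Fin 3), lo w k ≤ hi w k := by
      intro w k
      obtain ⟨i, hlt, heq⟩ := hrep.1 w
      rcases eq_or_ne k i with rfl | hk
      · exact hlt.le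
      · exact (heq k hk).le
    have hne : G.neighborSet v = ∅ := (Set.ncard_eq_zero (Set.toFinite _)).mp hd0
    have hnadj : ∀ w, ¬ G.Adj v w := by
      intro w hw
      have : w ∈ G.neighborSet v := hw
      rw [hne] at this
      exact this
    set M : ℝ := 1 + ∑ w : ({v}ᶜ : Set V), |hi w 1| with hM
    have hMgt : ∀ w : ({v}ᶜ : Set V), hi w 1 < M := by
      intro w
      have h1 : |hi w 1| ≤ ∑ w : ({v}ᶜ : Set V), |hi w 1| :=
        Finset.single_le_sum (f := fun w : ({v}ᶜ : Set V) => |hi w 1|)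
          (fun _ _ => abs_nonneg _) (Finset.mem_univ w)
      have h2 := le_abs_self (hi w 1)
      rw [hM]; linarith
    set a : Fin 3 → ℝ := fun k => if k = 0 then 0 else M with ha
    set b : Fin 3 → ℝ := fun k => if k = 0 then 1 else M with hb
    have hempty : ∀ (w : ({v}ᶜ : Set V)) x, x ∈ Set.Icc a b →
        x ∈ Set.Icc (lo w) (hi w) → False := by
      intro w x hx hxw
      have h1 : x 1 = M := by
        have e1 := hx.1 1
        have e2 := hx.2 1
        simp [ha, hb] at e1 e2
        linarith
      have h2 : x 1 ≤ hi w 1 := hxw.2 1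
      have := hMgt w
      linarith
    refine IsSegRep.extend G v lo hi hrep a b ⟨0, by norm_num [ha, hb], ?_⟩ ?_ ?_ ?_
    · intro j hj; simp [ha, hb, hj]
    · intro w
      constructor
      · intro hadj; exact absurd hadj (hnadj _)
      · rintro ⟨x, hx1, hx2⟩; exact absurd (hempty w x hx1 hx2) (fun h => h)
    · intro w
      rw [Set.disjoint_left]
      intro x hx1 hx2
      exact hempty w x hx1.1 hx2.1
    · intro w hc
      have hab : a ≤ b := by
        intro k
        rcases eq_or_ne k 0 with rfl | hk
        · simp [ha, hb]
        · simp [ha, hb, hk]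
      have hmemA : a ∈ Set.Icc a b ∪ Set.Icc (lo w) (hi w) :=
        Or.inl ⟨le_refl a, hab⟩
      have hmemB : b ∈ Set.Icc a b ∪ Set.Icc (lo w) (hi w) :=
        Or.inl ⟨hab, le_refl b⟩
      have hmemL : lo w ∈ Set.Icc a b ∪ Set.Icc (lo w) (hi w) :=
        Or.inr ⟨le_refl _, fun k => hle w k⟩
      have key := coord_eq_of_collinear hc hmemA hmemB hmemL
        (j := 0) (fun k hk => by simp [ha, hb, hk]) (by norm_num [ha, hb])
      have h1 : lo w 1 = M := by
        have := key 1 (by decide)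
        simpa [ha] using this
      have := hMgt w
      have := hle w 1
      linarith
  ·
    classical
    obtain ⟨lo, hi, hrep⟩ := h
    obtain ⟨hseg, hadjr, hdisr, hcolr⟩ := hrep
    choose dir hdir hdir' using hseg
    have hle : ∀ (w : ({v}ᶜ : Set V)) (k : Fin 3), lo w k ≤ hi w k := by
      intro w k
      rcases eq_or_ne k (dir w) with rfl | hk
      · exact (hdir w).le
      · exact (hdir' w k hk).le
    have hIccL : ∀ (w : ({v}ᶜ : Set V)) x, x ∈ Set.Icc (lo w) (hi w) →
        ∀ k, k ≠ dir w → x k = lo w k := by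
      intro w x hx k hk
      have h1 := hx.1 k
      have h2 := hx.2 k
      have h3 := hdir' w k hk
      linarith
    -- the unique neighbor
    obtain ⟨u, hu⟩ := Set.ncard_eq_one.mp hd1
    have hadjv : ∀ w, G.Adj v w ↔ w = u := by
      intro w
      rw [← SimpleGraph.mem_neighborSet, hu, Set.mem_singleton_iff]
    have huv : G.Adj v u := (hadjv u).mpr rfl
    have hune : u ≠ v := fun h => G.loopless.irrefl v (h ▸ huv)
    set u' : ({v}ᶜ : Set V) := ⟨u, hune⟩ with hu'
    set i := dir u' with hi'
    set j : Fin 3 := if i = 0 then 1 else 0 with hjdef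
    have hji : j ≠ i := by
      rcases eq_or_ne i 0 with h0 | h0
      · rw [hjdef, if_pos h0, h0]; decide
      · rw [hjdef, if_neg h0]; exact Ne.symm h0
    -- lines
    set L : ({v}ᶜ : Set V) → Set (Fin 3 → ℝ) :=
      fun w => {q | ∀ k, k ≠ dir w → q k = lo w k} with hL
    have hIccSubL : ∀ (w : ({v}ᶜ : Set V)), Set.Icc (lo w) (hi w) ⊆ L w :=
      fun w x hx k hk => hIccL w x hx k hk
    set pt : ℝ → (Fin 3 → ℝ) := fun t k => if k = i then t else lo u' k with hpt
    set Bad : Set ℝ := ⋃ w ∈ {w : ({v}ᶜ : Set V) | w ≠ u'}, {t | pt t ∈ L w} with hBad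
    have hBadFin : Bad.Finite := by
      apply Set.Finite.biUnion (Set.toFinite _)
      intro w hw
      apply Set.Subsingleton.finite
      intro t1 ht1 t2 ht2
      rcases eq_or_ne (dir w) i with hdw | hdw
      · exfalso
        apply hcolr u' w (Ne.symm hw)
        apply Collinear.subset _ (collinear_pi_line i (lo u'))
        rintro x (hx | hx)
        · intro k hk
          exact hIccL u' x hx k hk
        · intro k hk
          have e1 : x k = lo w k := hIccL w x hx k (hdw ▸ hk)
          have e2 : pt t1 k = lo w k := ht1 k (hdw ▸ hk)
          have e3 : pt t1 k = lo u' k := by rw [hpt]; simp [hk]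
          rw [e1, ← e2, e3]
      · have e1 : t1 = lo w i := by
          have := ht1 i (Ne.symm hdw)
          rw [hpt] at this
          simpa using this
        have e2 : t2 = lo w i := by
          have := ht2 i (Ne.symm hdw)
          rw [hpt] at this
          simpa using this
        rw [e1, e2]
    obtain ⟨t, ht⟩ := ((Set.Ioo_infinite (hdir u')).diff hBadFin).nonempty
    set p : Fin 3 → ℝ := pt t with hp
    have hpk : ∀ k, k ≠ i → p k = lo u' k := by
      intro k hk; rw [hp, hpt]; simp [hk]
    have hpi : lo u' i < p i ∧ p i < hi u' i := by
      have h1 := ht.1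
      constructor
      · have := h1.1; rw [hp, hpt]; simpa using this
      · have := h1.2; rw [hp, hpt]; simpa using this
    have hpU : p ∈ Set.Icc (lo u') (hi u') := by
      constructor
      · intro k
        rcases eq_or_ne k i with rfl | hk
        · exact hpi.1.le
        · rw [hpk k hk]
      · intro k
        rcases eq_or_ne k i with rfl | hk
        · exact hpi.2.le
        · rw [hpk k hk]; exact (hdir' u' k hk).le
    have hpL : ∀ w : ({v}ᶜ : Set V), w ≠ u' → p ∉ L w := by
      intro w hw hmem
      exact ht.2 (Set.mem_biUnion hw hmem)
    have hpIcc : ∀ w : ({v}ᶜ : Set V), w ≠ u' → p ∉ Set.Icc (lo w) (hi w) :=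
      fun w hw hm => hpL w hw (hIccSubL w hm)
    -- choose epsilon
    haveI : Nonempty ({v}ᶜ : Set V) := ⟨u'⟩
    set m : ℝ := Finset.univ.inf' Finset.univ_nonempty
      (fun w : ({v}ᶜ : Set V) => if p j < lo w j then lo w j - p j else 1) with hm
    have hm0 : 0 < m := by
      rw [hm, Finset.lt_inf'_iff]
      intro w _
      split_ifs with h
      · linarith
      · norm_num
    set ε : ℝ := min 1 m / 2 with hε
    have hε0 : 0 < ε := by
      rw [hε]
      have := lt_min one_pos hm0
      linarith [lt_min one_pos hm0]
    have hεlt : ∀ w : ({v}ᶜ : Set V), p j < lo w j → p j + ε < lo w j := by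
      intro w hw
      have h1 : m ≤ lo w j - p j := by
        have h2 := Finset.inf'_le
          (fun w : ({v}ᶜ : Set V) => if p j < lo w j then lo w j - p j else 1)
          (Finset.mem_univ w)
        rw [← hm, if_pos hw] at h2
        exact h2
      have h3 : ε < m := by
        rw [hε]
        have := min_le_right (1:ℝ) m
        linarith
      linarith
    set b : Fin 3 → ℝ := fun k => if k = j then p k + ε else p k with hbdef
    have hbj : p j < b j := by rw [hbdef]; simp; linarith
    have hab : p ≤ b := by
      intro k
      rcases eq_or_ne k j with rfl | hk
      · exact hbj.le
      · rw [hbdef]; simp [hk]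
    have hIccab : ∀ x, x ∈ Set.Icc p b → (∀ k, k ≠ j → x k = p k) ∧
        (p j ≤ x j ∧ x j ≤ p j + ε) := by
      intro x hx
      have hxb := hx.2
      have hxp := hx.1
      refine ⟨?_, hxp j, ?_⟩
      · intro k hk
        have h1 := hxp k
        have h2 := hxb k
        rw [hbdef] at h2
        simp [hk] at h2
        exact le_antisymm h2 h1
      · have h2 := hxb j
        rw [hbdef] at h2
        simpa using h2
    have hempty : ∀ (w : ({v}ᶜ : Set V)), w ≠ u' → ∀ x, x ∈ Set.Icc p b →
        x ∈ Set.Icc (lo w) (hi w) → False := by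
      intro w hw x hxa hxw
      obtain ⟨hxk, hxj1, hxj2⟩ := hIccab x hxa
      rcases eq_or_ne (dir w) j with hdw | hdw
      · apply hpL w hw
        intro k hk
        have hk' : k ≠ j := by rw [← hdw]; exact hk
        rw [← hxk k hk']
        exact hIccL w x hxw k hk
      · have hxj : x j = lo w j := hIccL w x hxw j (Ne.symm hdw)
        rcases lt_trichotomy (lo w j) (p j) with hlt | heq | hgt
        · rw [hxj] at hxj1; linarith
        · have hxp : x = p := by
            funext k
            rcases eq_or_ne k j with rfl | hk
            · rw [hxj, heq]
            · exact hxk k hk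
          rw [hxp] at hxw
          exact hpIcc w hw hxw
        · have := hεlt w hgt
          rw [hxj] at hxj2
          linarith
    refine IsSegRep.extend G v lo hi
      ⟨fun w => ⟨dir w, hdir w, hdir' w⟩, hadjr, hdisr, hcolr⟩ p b
      ⟨j, hbj, ?_⟩ ?_ ?_ ?_
    · intro k hk
      rw [hbdef]; simp [hk]
    · intro w
      rw [hadjv ↑w]
      constructor
      · intro hwu
        have hwu' : w = u' := Subtype.ext hwu
        rw [hwu']
        exact ⟨p, ⟨le_refl p, hab⟩, hpU⟩
      · rintro ⟨x, hx1, hx2⟩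
        by_contra hne'
        have hwu : w ≠ u' := fun hh => hne' (by rw [hh])
        exact hempty w hwu x hx1 hx2
    · intro w
      rw [Set.disjoint_left]
      intro x hx1 hx2
      rcases eq_or_ne w u' with rfl | hw
      · have h1 : p j < x j := (hx1.2 j hbj).1
        have h2 : x j = lo u' j := hIccL u' x hx2.1 j hji
        have h3 : p j = lo u' j := hpk j hji
        rw [h2, ← h3] at h1
        exact lt_irrefl _ h1
      · exact hempty w hw x hx1.1 hx2.1
    · intro w hc
      have hmemA : p ∈ Set.Icc p b ∪ Set.Icc (lo w) (hi w) :=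
        Or.inl ⟨le_refl p, hab⟩
      have hmemB : b ∈ Set.Icc p b ∪ Set.Icc (lo w) (hi w) :=
        Or.inl ⟨hab, le_refl b⟩
      have hmemL : lo w ∈ Set.Icc p b ∪ Set.Icc (lo w) (hi w) :=
        Or.inr ⟨le_refl _, fun k => hle w k⟩
      have hmemH : hi w ∈ Set.Icc p b ∪ Set.Icc (lo w) (hi w) :=
        Or.inr ⟨fun k => hle w k, le_refl _⟩
      have hpq : ∀ k, k ≠ j → p k = b k := by
        intro k hk; rw [hbdef]; simp [hk]
      have keyL := coord_eq_of_collinear hc hmemA hmemB hmemL hpq hbj.ne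
      have keyH := coord_eq_of_collinear hc hmemA hmemB hmemH hpq hbj.ne
      have hdwj : dir w = j := by
        by_contra hne'
        have hlt := hdir w
        rw [keyL (dir w) hne', keyH (dir w) hne'] at hlt
        exact lt_irrefl _ hlt
      rcases eq_or_ne w u' with rfl | hw
      · exact hji hdwj.symm
      · apply hpL w hw
        intro k hk
        have hk' : k ≠ j := by rw [← hdwj]; exact hk
        exact (keyL k hk').symm
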